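/- Let P be a finite set of points in the plane and let θ be any real number. The rectilinear convex hull RCH_θ(P) is ortho-convex with respect to the rotated axes: for every x₀ ∈ ℝ², the intersection of RCH_θ(P) with the line {x₀ + t·w_θ : t ∈ ℝ} is a preconnected set, and likewise the intersection of RCH_θ(P) with the line {x₀ + t·w_{θ+π/2} : t ∈ ℝ} is preconnected. -/

import Mathlib

open scoped RealInnerProductSpace

noncomputable section

/-- The Euclidean plane. -/
abbrev Plane := EuclideanSpace ℝ (Fin 2)

/-- The unit vector `w_θ = (cos θ, sin θ)`. -/
def wdir (θ : ℝ) : Plane := WithLp.toLp 2 ![Real.cos θ, Real.sin θ]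

/-- The open θ-quadrant of type `i` with apex `x`. -/
def openQuad (θ : ℝ) (i : Fin 4) (x : Plane) : Set Plane :=
  {z | 0 < ⟪z - x, wdir (θ + (i : ℕ) * (Real.pi / 2))⟫ ∧
       0 < ⟪z - x, wdir (θ + ((i : ℕ) + 1) * (Real.pi / 2))⟫}

/-- The rectilinear convex hull of `P` with orientation `θ`. -/
def RCH (θ : ℝ) (P : Set Plane) : Set Plane :=
  Set.univ \ ⋃ (x : Plane) (i : Fin 4) (_ : openQuad θ i x ∩ P = ∅), openQuad θ i x

lemma inner_wdir (a b : ℝ) : ⟪wdir a, wdir b⟫ = Real.cos (a - b) := by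
  simp [wdir, PiLp.inner_apply, Fin.sum_univ_two, RCLike.inner_apply, Real.cos_sub]
  ring

lemma cos_sin_int (m : ℤ) : Real.cos (m * (Real.pi/2)) * Real.sin (m * (Real.pi/2)) = 0 := by
  have h := Real.sin_int_mul_pi m
  have h2 : Real.sin (2 * (m * (Real.pi/2))) =
      2 * Real.sin (m * (Real.pi/2)) * Real.cos (m * (Real.pi/2)) := Real.sin_two_mul _
  have : (2 : ℝ) * (m * (Real.pi/2)) = m * Real.pi := by ring
  rw [this, h] at h2
  nlinarith

lemma key (P : Set Plane) (θ ψ : ℝ)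
    (h : ∀ i : Fin 4, ⟪wdir ψ, wdir (θ + (i : ℕ) * (Real.pi / 2))⟫ *
        ⟪wdir ψ, wdir (θ + ((i : ℕ) + 1) * (Real.pi / 2))⟫ = 0)
    (x₀ : Plane) :
    IsPreconnected (RCH θ P ∩ {z | ∃ t : ℝ, z = x₀ + t • wdir ψ}) := by
  set f : ℝ → Plane := fun t => x₀ + t • wdir ψ with hf
  have hline : {z : Plane | ∃ t : ℝ, z = x₀ + t • wdir ψ} = Set.range f := by
    ext z; simp [hf, eq_comm]
  have hcont : Continuous f := by continuity
  rw [hline, Set.inter_comm, ← Set.image_preimage_eq_range_inter]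
  apply IsPreconnected.image _ f hcont.continuousOn
  have hoc : (f ⁻¹' RCH θ P).OrdConnected := by
    constructor
    intro t₁ h₁ t₂ h₂ t ht
    -- membership in RCH: not in any free quadrant
    have hmem : ∀ s : ℝ, f s ∈ RCH θ P ↔
        ∀ x i, openQuad θ i x ∩ P = ∅ → f s ∉ openQuad θ i x := by
      intro s
      simp [RCH, Set.mem_diff, Set.mem_iUnion]
    rw [Set.mem_preimage, hmem]
    intro x i hfree hq
    have h₁' := (hmem t₁).1 h₁ x i hfree
    have h₂' := (hmem t₂).1 h₂ x i hfree
    -- affine expressions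
    set u := wdir (θ + (i : ℕ) * (Real.pi / 2)) with hu
    set v := wdir (θ + ((i : ℕ) + 1) * (Real.pi / 2)) with hv
    have haff : ∀ (s : ℝ) (w : Plane), ⟪f s - x, w⟫ = ⟪x₀ - x, w⟫ + s * ⟪wdir ψ, w⟫ := by
      intro s w
      have : f s - x = (x₀ - x) + s • wdir ψ := by
        simp [hf]; abel
      rw [this, inner_add_left, real_inner_smul_left]
    have hQ : ∀ s : ℝ, f s ∈ openQuad θ i x ↔
        0 < ⟪x₀ - x, u⟫ + s * ⟪wdir ψ, u⟫ ∧ 0 < ⟪x₀ - x, v⟫ + s * ⟪wdir ψ, v⟫ := by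
      intro s
      rw [openQuad]
      simp only [Set.mem_setOf_eq, haff s u, haff s v, ← hu, ← hv]
    rw [hQ] at hq
    have hs := h i
    rw [← hu, ← hv] at hs
    rcases mul_eq_zero.1 hs with h0 | h0
    · rcases le_or_gt 0 ⟪wdir ψ, v⟫ with hsg | hsg
      · exact h₂' ((hQ t₂).2 ⟨by rw [h0]; rw [h0] at hq; simpa using hq.1,
          lt_of_lt_of_le hq.2 (by nlinarith [ht.2])⟩)
      · exact h₁' ((hQ t₁).2 ⟨by rw [h0]; rw [h0] at hq; simpa using hq.1,
          lt_of_lt_of_le hq.2 (by nlinarith [ht.1])⟩)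
    · rcases le_or_gt 0 ⟪wdir ψ, u⟫ with hsg | hsg
      · exact h₂' ((hQ t₂).2 ⟨lt_of_lt_of_le hq.1 (by nlinarith [ht.2]),
          by rw [h0]; rw [h0] at hq; simpa using hq.2⟩)
      · exact h₁' ((hQ t₁).2 ⟨lt_of_lt_of_le hq.1 (by nlinarith [ht.1]),
          by rw [h0]; rw [h0] at hq; simpa using hq.2⟩)
  exact hoc.isPreconnected

/-- The rectilinear convex hull is ortho-convex with respect to the rotated axes: its
intersection with any line parallel to the rotated x-axis or the rotated y-axis is
preconnected. -/
theorem rch_orthoConvex (P : Set Plane) (hP : P.Finite) (θ : ℝ) (x₀ : Plane) :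
    IsPreconnected (RCH θ P ∩ {z | ∃ t : ℝ, z = x₀ + t • wdir θ}) ∧
    IsPreconnected (RCH θ P ∩ {z | ∃ t : ℝ, z = x₀ + t • wdir (θ + Real.pi / 2)}) := by
  constructor
  · apply key
    intro i
    rw [inner_wdir, inner_wdir]
    have h1 : θ - (θ + (i : ℕ) * (Real.pi / 2)) = ((-(i : ℤ)) : ℝ) * (Real.pi/2) := by
      push_cast; ring
    have h2 : θ - (θ + ((i : ℕ) + 1) * (Real.pi / 2)) =
        ((-(i : ℤ)) : ℝ) * (Real.pi/2) - Real.pi/2 := by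
      push_cast; ring
    rw [h1, h2, Real.cos_sub_pi_div_two]
    exact_mod_cast cos_sin_int (-(i : ℤ))
  · apply key
    intro i
    rw [inner_wdir, inner_wdir]
    have h1 : θ + Real.pi/2 - (θ + (i : ℕ) * (Real.pi / 2)) =
        ((1 - (i : ℤ)) : ℝ) * (Real.pi/2) := by push_cast; ring
    have h2 : θ + Real.pi/2 - (θ + ((i : ℕ) + 1) * (Real.pi / 2)) =
        ((1 - (i : ℤ)) : ℝ) * (Real.pi/2) - Real.pi/2 := by push_cast; ring
    rw [h1, h2, Real.cos_sub_pi_div_two]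
    exact_mod_cast cos_sin_int (1 - (i : ℤ))
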